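/- If a triangulated category T admits a semi-orthogonal decomposition T = ⟨T₁, T₂⟩ and T is regular (has a strong generator), then both T₁ and T₂ are regular. -/

import Mathlib

/-!
Statement 2: If a triangulated category `T` admits a semi-orthogonal decomposition
`T = ⟨T₁, T₂⟩` and `T` is regular (has a strong generator), then both `T₁` and `T₂`
are regular.

`genIdx X d` denotes `⟨X⟩_{d+1}`, built from `X` by `d` cone-taking steps, closing
at each step under shifts, finite direct sums and direct summands; `X` is a strong
generator of a class `S` if `genIdx X d = S` for some `d`.
-/

open CategoryTheory Limits Pretriangulated

universe v u

section

variable {C : Type u} [Category.{v} C] [HasZeroObject C] [Preadditive C]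
  [HasShift C ℤ] [∀ n : ℤ, (shiftFunctor C n).Additive] [Pretriangulated C]
  [HasBinaryBiproducts C]

/-- The envelope `⟨I⟩`: closure under shifts, finite direct sums and direct summands. -/
inductive envelope (I : Set C) : C → Prop
  | of {X : C} : X ∈ I → envelope I X
  | shift {X : C} (n : ℤ) : envelope I X → envelope I (X⟦n⟧)
  | sum {X Y : C} : envelope I X → envelope I Y → envelope I (X ⊞ Y)
  | summand {X Z : C} (s : X ⟶ Z) (r : Z ⟶ X) :
      s ≫ r = 𝟙 X → envelope I Z → envelope I X

/-- `I₁ * I₂`: objects fitting into a distinguished triangle with outer terms in `I₁`, `I₂`. -/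
def starProd (I₁ I₂ : Set C) : Set C :=
  {Y | ∃ (Y₁ Y₂ : C) (_ : Y₁ ∈ I₁) (_ : Y₂ ∈ I₂) (f : Y₁ ⟶ Y) (g : Y ⟶ Y₂)
    (h : Y₂ ⟶ Y₁⟦(1 : ℤ)⟧), Triangle.mk f g h ∈ distTriang C}

/-- `I₁ ◇ I₂ = ⟨I₁ * I₂⟩`. -/
def diamond (I₁ I₂ : Set C) : Set C := {X | envelope (starProd I₁ I₂) X}

/-- `genIdx X d = ⟨X⟩_{d+1}`. -/
def genIdx (X : C) : ℕ → Set C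
  | 0 => {Y | envelope {X} Y}
  | d + 1 => diamond (genIdx X d) {Y | envelope {X} Y}

/-- Semi-orthogonal decomposition `T = ⟨T₁, T₂⟩`. -/
structure SemiorthogonalDecomposition (C : Type u) [Category.{v} C] [HasZeroObject C]
    [Preadditive C] [HasShift C ℤ] [∀ n : ℤ, (shiftFunctor C n).Additive]
    [Pretriangulated C] where
  T₁ : Set C
  T₂ : Set C
  isoClosed₁ : ∀ {X Y : C}, (X ≅ Y) → X ∈ T₁ → Y ∈ T₁
  isoClosed₂ : ∀ {X Y : C}, (X ≅ Y) → X ∈ T₂ → Y ∈ T₂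
  shiftClosed₁ : ∀ (X : C) (n : ℤ), X ∈ T₁ → X⟦n⟧ ∈ T₁
  shiftClosed₂ : ∀ (X : C) (n : ℤ), X ∈ T₂ → X⟦n⟧ ∈ T₂
  extClosed₁ : ∀ (T : Triangle C), T ∈ (distTriang C) →
    T.obj₁ ∈ T₁ → T.obj₃ ∈ T₁ → T.obj₂ ∈ T₁
  extClosed₂ : ∀ (T : Triangle C), T ∈ (distTriang C) →
    T.obj₁ ∈ T₂ → T.obj₃ ∈ T₂ → T.obj₂ ∈ T₂
  homZero : ∀ {X Y : C}, X ∈ T₁ → Y ∈ T₂ → ∀ f : Y ⟶ X, f = 0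
  decomp : ∀ Z : C, ∃ (X Y : C) (_ : X ∈ T₁) (_ : Y ∈ T₂) (f : Y ⟶ Z) (g : Z ⟶ X)
    (h : X ⟶ Y⟦(1 : ℤ)⟧), Triangle.mk f g h ∈ distTriang C

end


section Lemmas

variable {C : Type u} [Category.{v} C] [HasZeroObject C] [Preadditive C]
  [HasShift C ℤ] [∀ n : ℤ, (shiftFunctor C n).Additive] [Pretriangulated C]
  [HasBinaryBiproducts C]

variable (D : SemiorthogonalDecomposition C)

/-- A chosen decomposition triangle of an object. -/
structure Dec (Z : C) where
  Y : C
  X : C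
  hX : X ∈ D.T₁
  hY : Y ∈ D.T₂
  f : Y ⟶ Z
  g : Z ⟶ X
  h : X ⟶ Y⟦(1 : ℤ)⟧
  dist : Triangle.mk f g h ∈ distTriang C

variable {D}

lemma Dec.surj₁ {Z : C} (E : Dec D Z) {W : C} (hW : W ∈ D.T₁) (m : Z ⟶ W) :
    ∃ m', m = E.g ≫ m' := by
  obtain ⟨m', hm'⟩ := Triangle.yoneda_exact₂ _ E.dist m (D.homZero hW E.hY _)
  exact ⟨m', hm'⟩

lemma Dec.inj₁ {Z : C} (E : Dec D Z) {W : C} (hW : W ∈ D.T₁) (m : E.X ⟶ W)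
    (hm : E.g ≫ m = 0) : m = 0 := by
  obtain ⟨w, hw⟩ := Triangle.yoneda_exact₂ _ (rot_of_distTriang _ E.dist) m hm
  rw [hw, D.homZero hW (D.shiftClosed₂ _ 1 E.hY) w]
  exact comp_zero

lemma Dec.surj₂ {Z : C} (E : Dec D Z) {W : C} (hW : W ∈ D.T₂) (m : W ⟶ Z) :
    ∃ m', m = m' ≫ E.f := by
  obtain ⟨m', hm'⟩ := Triangle.coyoneda_exact₂ _ E.dist m (D.homZero E.hX hW _)
  exact ⟨m', hm'⟩

lemma Dec.inj₂ {Z : C} (E : Dec D Z) {W : C} (hW : W ∈ D.T₂) (m : W ⟶ E.Y)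
    (hm : m ≫ E.f = 0) : m = 0 := by
  obtain ⟨w, hw⟩ := Triangle.coyoneda_exact₂ _ (inv_rot_of_distTriang _ E.dist) m hm
  rw [hw, D.homZero (D.shiftClosed₁ _ (-1) E.hX) hW w]
  exact zero_comp

set_option linter.unusedSectionVars false
open CategoryTheory.Preadditive

/-- Some decomposition of `Z`, from the axiom. -/
noncomputable def Dec.ofDecomp (Z : C) : Dec D Z := by
  choose X Y hX hY f g h dist using D.decomp Z
  exact ⟨Y, X, hX, hY, f, g, h, dist⟩

lemma Dec.liftX {Z Z' : C} (E : Dec D Z) (E' : Dec D Z') (φ : Z ⟶ Z') :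
    ∃ ψ : E.X ⟶ E'.X, E.g ≫ ψ = φ ≫ E'.g := by
  obtain ⟨ψ, hψ⟩ := E.surj₁ E'.hX (φ ≫ E'.g)
  exact ⟨ψ, hψ.symm⟩

lemma Dec.liftY {Z Z' : C} (E : Dec D Z) (E' : Dec D Z') (φ : Z ⟶ Z') :
    ∃ ψ : E.Y ⟶ E'.Y, ψ ≫ E'.f = E.f ≫ φ := by
  obtain ⟨ψ, hψ⟩ := E'.surj₂ E.hY (E.f ≫ φ)
  exact ⟨ψ, hψ.symm⟩

/-- Shift of a decomposition. -/
noncomputable def Dec.shift {Z : C} (E : Dec D Z) (m : ℤ) : Dec D (Z⟦m⟧) where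
  Y := E.Y⟦m⟧
  X := E.X⟦m⟧
  hX := D.shiftClosed₁ _ m E.hX
  hY := D.shiftClosed₂ _ m E.hY
  f := m.negOnePow • E.f⟦m⟧'
  g := m.negOnePow • E.g⟦m⟧'
  h := (m.negOnePow • E.h⟦m⟧') ≫ (shiftFunctorComm C 1 m).hom.app E.Y
  dist := by
    have := Triangle.shift_distinguished _ E.dist m
    refine Pretriangulated.isomorphic_distinguished _ this _ ?_
    exact Triangle.isoMk _ _ (Iso.refl _) (Iso.refl _) (Iso.refl _)
      (by
        change (m.negOnePow • E.f⟦m⟧') ≫ 𝟙 (Z⟦m⟧) = 𝟙 (E.Y⟦m⟧) ≫ (m.negOnePow • E.f⟦m⟧')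
        simp)
      (by
        change (m.negOnePow • E.g⟦m⟧') ≫ 𝟙 (E.X⟦m⟧) = 𝟙 (Z⟦m⟧) ≫ (m.negOnePow • E.g⟦m⟧')
        simp)
      (by
        change ((m.negOnePow • E.h⟦m⟧') ≫ (shiftFunctorComm C 1 m).hom.app E.Y) ≫
          (𝟙 (E.Y⟦m⟧))⟦(1 : ℤ)⟧' =
          𝟙 (E.X⟦m⟧) ≫ (m.negOnePow • E.h⟦m⟧' ≫ (shiftFunctorComm C 1 m).hom.app E.Y)
        simp)

lemma Dec.shift_g {Z : C} (E : Dec D Z) (m : ℤ) :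
    (E.shift m).g = m.negOnePow • E.g⟦m⟧' := rfl

lemma Dec.shift_f {Z : C} (E : Dec D Z) (m : ℤ) :
    (E.shift m).f = m.negOnePow • E.f⟦m⟧' := rfl

lemma Dec.surj₁_shift {Z : C} (E : Dec D Z) {W : C} (hW : W ∈ D.T₁) (m : ℤ)
    (ρ : Z⟦m⟧ ⟶ W) : ∃ ρ', ρ = E.g⟦m⟧' ≫ ρ' := by
  obtain ⟨ρ', hρ'⟩ := (E.shift m).surj₁ hW ρ
  exact ⟨m.negOnePow • ρ', by
    rw [hρ', Dec.shift_g]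
    exact (Linear.units_smul_comp _ _ _).trans (Linear.comp_units_smul _ _ _).symm⟩

lemma Dec.inj₁_shift {Z : C} (E : Dec D Z) {W : C} (hW : W ∈ D.T₁) (m : ℤ)
    (ρ : E.X⟦m⟧ ⟶ W) (hρ : E.g⟦m⟧' ≫ ρ = 0) : ρ = 0 := by
  refine (E.shift m).inj₁ hW ρ ?_
  rw [Dec.shift_g]
  exact (Linear.units_smul_comp _ _ _).trans ((congrArg (m.negOnePow • ·) hρ).trans (smul_zero _))

lemma Dec.surj₂_shift {Z : C} (E : Dec D Z) {W : C} (hW : W ∈ D.T₂) (m : ℤ)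
    (ρ : W ⟶ Z⟦m⟧) : ∃ ρ', ρ = ρ' ≫ E.f⟦m⟧' := by
  obtain ⟨ρ', hρ'⟩ := (E.shift m).surj₂ hW ρ
  exact ⟨m.negOnePow • ρ', by
    rw [hρ', Dec.shift_f]
    exact (Linear.comp_units_smul _ _ _).trans (Linear.units_smul_comp _ _ _).symm⟩

lemma Dec.inj₂_shift {Z : C} (E : Dec D Z) {W : C} (hW : W ∈ D.T₂) (m : ℤ)
    (ρ : W ⟶ E.Y⟦m⟧) (hρ : ρ ≫ E.f⟦m⟧' = 0) : ρ = 0 := by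
  refine (E.shift m).inj₂ hW ρ ?_
  rw [Dec.shift_f]
  exact (Linear.comp_units_smul _ _ _).trans ((congrArg (m.negOnePow • ·) hρ).trans (smul_zero _))

/-- `X`-components of decompositions of a summand are summands. -/
lemma Dec.X_summand {Z Z' : C} (E : Dec D Z) (E' : Dec D Z') (s : Z ⟶ Z') (r : Z' ⟶ Z)
    (hsr : s ≫ r = 𝟙 Z) : ∃ (a : E.X ⟶ E'.X) (b : E'.X ⟶ E.X), a ≫ b = 𝟙 E.X := by
  obtain ⟨a, ha⟩ := E.liftX E' s
  obtain ⟨b, hb⟩ := E'.liftX E r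
  refine ⟨a, b, ?_⟩
  have : E.g ≫ (a ≫ b - 𝟙 E.X) = 0 := by
    rw [comp_sub, ← Category.assoc, ha, Category.assoc, hb, ← Category.assoc, hsr]
    simp
  have := E.inj₁ E.hX _ this
  rw [sub_eq_zero] at this
  exact this

lemma Dec.Y_summand {Z Z' : C} (E : Dec D Z) (E' : Dec D Z') (s : Z ⟶ Z') (r : Z' ⟶ Z)
    (hsr : s ≫ r = 𝟙 Z) : ∃ (a : E.Y ⟶ E'.Y) (b : E'.Y ⟶ E.Y), a ≫ b = 𝟙 E.Y := by
  obtain ⟨a, ha⟩ := E.liftY E' s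
  obtain ⟨b, hb⟩ := E'.liftY E r
  refine ⟨a, b, ?_⟩
  have : (a ≫ b - 𝟙 E.Y) ≫ E.f = 0 := by
    rw [sub_comp, Category.assoc, hb, ← Category.assoc, ha, Category.assoc, hsr]
    simp
  have := E.inj₂ E.hY _ this
  rw [sub_eq_zero] at this
  exact this

/-- Components of a decomposition of a biproduct. -/
lemma Dec.X_sum {Z₁ Z₂ : C} (E₁ : Dec D Z₁) (E₂ : Dec D Z₂) (E : Dec D (Z₁ ⊞ Z₂)) :
    ∃ e : E.X ≅ E₁.X ⊞ E₂.X, True := by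
  obtain ⟨α₁, hα₁⟩ := E.liftX E₁ biprod.fst
  obtain ⟨α₂, hα₂⟩ := E.liftX E₂ biprod.snd
  obtain ⟨β₁, hβ₁⟩ := E₁.liftX E biprod.inl
  obtain ⟨β₂, hβ₂⟩ := E₂.liftX E biprod.inr
  have h₁₁ : β₁ ≫ α₁ = 𝟙 E₁.X := by
    rw [← sub_eq_zero]
    refine E₁.inj₁ E₁.hX _ ?_
    rw [comp_sub, ← Category.assoc, hβ₁, Category.assoc, hα₁, ← Category.assoc]
    simp
  have h₂₂ : β₂ ≫ α₂ = 𝟙 E₂.X := by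
    rw [← sub_eq_zero]
    refine E₂.inj₁ E₂.hX _ ?_
    rw [comp_sub, ← Category.assoc, hβ₂, Category.assoc, hα₂, ← Category.assoc]
    simp
  have h₁₂ : β₁ ≫ α₂ = 0 := by
    refine E₁.inj₁ E₂.hX _ ?_
    rw [← Category.assoc, hβ₁, Category.assoc, hα₂, ← Category.assoc]
    simp
  have h₂₁ : β₂ ≫ α₁ = 0 := by
    refine E₂.inj₁ E₁.hX _ ?_
    rw [← Category.assoc, hβ₂, Category.assoc, hα₁, ← Category.assoc]
    simp
  have htot : α₁ ≫ β₁ + α₂ ≫ β₂ = 𝟙 E.X := by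
    rw [← sub_eq_zero]
    refine E.inj₁ E.hX _ ?_
    rw [comp_sub, comp_add, ← Category.assoc, hα₁, ← Category.assoc, hα₂,
      Category.assoc, hβ₁, Category.assoc, hβ₂, ← Category.assoc, ← Category.assoc,
      ← add_comp, biprod.total]
    simp
  refine ⟨⟨biprod.lift α₁ α₂, biprod.desc β₁ β₂, ?_, ?_⟩, trivial⟩
  · rw [biprod.lift_desc, htot]
  · ext <;> simp [h₁₁, h₁₂, h₂₁, h₂₂]

lemma Dec.Y_sum {Z₁ Z₂ : C} (E₁ : Dec D Z₁) (E₂ : Dec D Z₂) (E : Dec D (Z₁ ⊞ Z₂)) :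
    ∃ e : E.Y ≅ E₁.Y ⊞ E₂.Y, True := by
  obtain ⟨α₁, hα₁⟩ := E₁.liftY E biprod.inl
  obtain ⟨α₂, hα₂⟩ := E₂.liftY E biprod.inr
  obtain ⟨β₁, hβ₁⟩ := E.liftY E₁ biprod.fst
  obtain ⟨β₂, hβ₂⟩ := E.liftY E₂ biprod.snd
  have h₁₁ : α₁ ≫ β₁ = 𝟙 E₁.Y := by
    rw [← sub_eq_zero]
    refine E₁.inj₂ E₁.hY _ ?_
    rw [sub_comp, Category.assoc, hβ₁, ← Category.assoc, hα₁, Category.assoc]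
    simp
  have h₂₂ : α₂ ≫ β₂ = 𝟙 E₂.Y := by
    rw [← sub_eq_zero]
    refine E₂.inj₂ E₂.hY _ ?_
    rw [sub_comp, Category.assoc, hβ₂, ← Category.assoc, hα₂, Category.assoc]
    simp
  have h₁₂ : α₁ ≫ β₂ = 0 := by
    refine E₂.inj₂ E₁.hY _ ?_
    rw [Category.assoc, hβ₂, ← Category.assoc, hα₁, Category.assoc]
    simp
  have h₂₁ : α₂ ≫ β₁ = 0 := by
    refine E₁.inj₂ E₂.hY _ ?_
    rw [Category.assoc, hβ₁, ← Category.assoc, hα₂, Category.assoc]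
    simp
  have htot : β₁ ≫ α₁ + β₂ ≫ α₂ = 𝟙 E.Y := by
    rw [← sub_eq_zero]
    refine E.inj₂ E.hY _ ?_
    rw [sub_comp, add_comp, Category.assoc, hα₁, Category.assoc, hα₂,
      ← Category.assoc, hβ₁, ← Category.assoc, hβ₂, Category.assoc, Category.assoc,
      ← comp_add, biprod.total]
    simp
  refine ⟨⟨biprod.lift β₁ β₂, biprod.desc α₁ α₂, ?_, ?_⟩, trivial⟩
  · rw [biprod.lift_desc, htot]
  · ext <;> simp [h₁₁, h₁₂, h₂₁, h₂₂]

/-- The `T₁`-components of decompositions of a distinguished triangle form a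
distinguished triangle. -/
lemma Dec.X_ext {A Z B : C} (EA : Dec D A) (EZ : Dec D Z) (EB : Dec D B)
    (a : A ⟶ Z) (b : Z ⟶ B) (c : B ⟶ A⟦(1 : ℤ)⟧)
    (hT : Triangle.mk a b c ∈ distTriang C) :
    ∃ (α : EA.X ⟶ EZ.X) (β : EZ.X ⟶ EB.X) (γ : EB.X ⟶ EA.X⟦(1 : ℤ)⟧),
      Triangle.mk α β γ ∈ distTriang C := by
  obtain ⟨α, hα⟩ := EA.liftX EZ a
  obtain ⟨Q, β', γ', hTQ⟩ := distinguished_cocone_triangle α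
  have hQT₁ : Q ∈ D.T₁ := D.extClosed₁ _ (rot_of_distTriang _ hTQ) EZ.hX
    (D.shiftClosed₁ _ 1 EA.hX)
  obtain ⟨ε, hε₁, hε₂⟩ := complete_distinguished_triangle_morphism
    (Triangle.mk a b c) (Triangle.mk α β' γ') hT hTQ EA.g EZ.g hα.symm
  change B ⟶ Q at ε
  change b ≫ ε = EZ.g ≫ β' at hε₁
  change c ≫ EA.g⟦(1 : ℤ)⟧' = ε ≫ γ' at hε₂
  have hab : a ≫ b = 0 := comp_distTriang_mor_zero₁₂ _ hT
  have hγα : γ' ≫ α⟦(1 : ℤ)⟧' = 0 := comp_distTriang_mor_zero₃₁ _ hTQ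
  obtain ⟨ψ, hψ⟩ := EB.surj₁ hQT₁ ε
  have hsurj : ∀ (W : C), W ∈ D.T₁ → ∀ m : EB.X ⟶ W, ∃ u : Q ⟶ W, ψ ≫ u = m := by
    intro W hW m
    obtain ⟨m', hm'⟩ := EZ.surj₁ hW (b ≫ EB.g ≫ m)
    have hαm' : α ≫ m' = 0 := by
      refine EA.inj₁ hW _ ?_
      rw [← Category.assoc, hα, Category.assoc, ← hm', ← Category.assoc,
        ← Category.assoc, hab, zero_comp, zero_comp]
    obtain ⟨u₀, hu₀⟩ := Triangle.yoneda_exact₂ _ hTQ m' hαm'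
    change Q ⟶ W at u₀
    change m' = β' ≫ u₀ at hu₀
    have hbd : b ≫ (EB.g ≫ m - ε ≫ u₀) = 0 := by
      rw [comp_sub, ← Category.assoc b ε, hε₁, Category.assoc, ← hu₀, hm', sub_self]
    obtain ⟨ρ, hρ⟩ := Triangle.yoneda_exact₃ _ hT _ hbd
    change A⟦(1 : ℤ)⟧ ⟶ W at ρ
    change EB.g ≫ m - ε ≫ u₀ = c ≫ ρ at hρ
    obtain ⟨ρ', hρ'⟩ := EA.surj₁_shift hW 1 ρ
    refine ⟨u₀ + γ' ≫ ρ', ?_⟩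
    have : EB.g ≫ (ψ ≫ (u₀ + γ' ≫ ρ') - m) = 0 := by
      rw [comp_sub, ← Category.assoc, ← hψ, comp_add, ← Category.assoc ε γ', ← hε₂,
        Category.assoc, ← hρ', ← hρ]
      abel
    have := EB.inj₁ hW _ this
    rwa [sub_eq_zero] at this
  have hinj : ∀ (W : C), W ∈ D.T₁ → ∀ u : Q ⟶ W, ψ ≫ u = 0 → u = 0 := by
    intro W hW u hu
    have hεu : ε ≫ u = 0 := by rw [hψ, Category.assoc, hu, comp_zero]
    have hβ'u : β' ≫ u = 0 := by
      refine EZ.inj₁ hW _ ?_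
      rw [← Category.assoc, ← hε₁, Category.assoc, hεu, comp_zero]
    obtain ⟨v, hv⟩ := Triangle.yoneda_exact₃ _ hTQ u hβ'u
    change EA.X⟦(1 : ℤ)⟧ ⟶ W at v
    change u = γ' ≫ v at hv
    have hcv : c ≫ (EA.g⟦(1 : ℤ)⟧' ≫ v) = 0 := by
      rw [← Category.assoc, hε₂, Category.assoc, ← hv, hεu]
    obtain ⟨w, hw⟩ := Triangle.yoneda_exact₂ _
      (rot_of_distTriang _ (rot_of_distTriang _ hT)) (EA.g⟦(1 : ℤ)⟧' ≫ v) hcv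
    change Z⟦(1 : ℤ)⟧ ⟶ W at w
    change EA.g⟦(1 : ℤ)⟧' ≫ v = (-a⟦(1 : ℤ)⟧') ≫ w at hw
    obtain ⟨w', hw'⟩ := EZ.surj₁_shift hW 1 w
    have hmap : EA.g⟦(1 : ℤ)⟧' ≫ α⟦(1 : ℤ)⟧' = a⟦(1 : ℤ)⟧' ≫ EZ.g⟦(1 : ℤ)⟧' := by
      rw [← Functor.map_comp, ← Functor.map_comp, hα]
    have hv0 : EA.g⟦(1 : ℤ)⟧' ≫ (v + α⟦(1 : ℤ)⟧' ≫ w') = 0 := by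
      rw [comp_add, hw, hw', ← Category.assoc (EA.g⟦(1 : ℤ)⟧'), hmap]
      simp only [Preadditive.neg_comp, Category.assoc]
      exact neg_add_cancel _
    have hv0' := EA.inj₁_shift hW 1 _ hv0
    have hveq : v = -(α⟦(1 : ℤ)⟧' ≫ w') := by
      rw [← sub_eq_zero]
      rw [sub_neg_eq_add]
      exact hv0'
    rw [hv, hveq, Preadditive.comp_neg, neg_eq_zero, ← Category.assoc, hγα, zero_comp]
  obtain ⟨θ, hθ⟩ := hsurj EB.X EB.hX (𝟙 EB.X)
  have hθψ : θ ≫ ψ = 𝟙 Q := by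
    have : ψ ≫ (θ ≫ ψ - 𝟙 Q) = 0 := by
      rw [comp_sub, ← Category.assoc, hθ]
      simp
    have := hinj Q hQT₁ _ this
    rwa [sub_eq_zero] at this
  refine ⟨α, β' ≫ θ, ψ ≫ γ', ?_⟩
  refine isomorphic_distinguished _ hTQ _
    (Triangle.isoMk _ _ (Iso.refl _) (Iso.refl _) ⟨ψ, θ, hθ, hθψ⟩ ?_ ?_ ?_)
  · change α ≫ 𝟙 EZ.X = 𝟙 EA.X ≫ α
    simp
  · change (β' ≫ θ) ≫ ψ = 𝟙 EZ.X ≫ β'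
    rw [Category.id_comp, Category.assoc, hθψ, Category.comp_id]
  · change (ψ ≫ γ') ≫ (𝟙 EA.X)⟦(1 : ℤ)⟧' = ψ ≫ γ'
    simp

/-- The `T₂`-components of decompositions of a distinguished triangle form a
distinguished triangle. -/
lemma Dec.Y_ext {A Z B : C} (EA : Dec D A) (EZ : Dec D Z) (EB : Dec D B)
    (a : A ⟶ Z) (b : Z ⟶ B) (c : B ⟶ A⟦(1 : ℤ)⟧)
    (hT : Triangle.mk a b c ∈ distTriang C) :
    ∃ (α : EA.Y ⟶ EZ.Y) (β : EZ.Y ⟶ EB.Y) (γ : EB.Y ⟶ EA.Y⟦(1 : ℤ)⟧),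
      Triangle.mk α β γ ∈ distTriang C := by
  obtain ⟨l, hl⟩ := EA.liftY EZ a
  obtain ⟨R, μ, ν, hTR⟩ := distinguished_cocone_triangle l
  have hRT₂ : R ∈ D.T₂ := D.extClosed₂ _ (rot_of_distTriang _ hTR) EZ.hY
    (D.shiftClosed₂ _ 1 EA.hY)
  obtain ⟨ε, hε₁, hε₂⟩ := complete_distinguished_triangle_morphism
    (Triangle.mk l μ ν) (Triangle.mk a b c) hTR hT EA.f EZ.f hl
  change R ⟶ B at ε
  change μ ≫ ε = EZ.f ≫ b at hε₁
  change ν ≫ EA.f⟦(1 : ℤ)⟧' = ε ≫ c at hε₂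
  have hca : c ≫ a⟦(1 : ℤ)⟧' = 0 := comp_distTriang_mor_zero₃₁ _ hT
  have hlμ : l ≫ μ = 0 := comp_distTriang_mor_zero₁₂ _ hTR
  obtain ⟨ψ, hψ⟩ := EB.surj₂ hRT₂ ε
  have hsurj : ∀ (W : C), W ∈ D.T₂ → ∀ m : W ⟶ EB.Y, ∃ u : W ⟶ R, u ≫ ψ = m := by
    intro W hW m
    obtain ⟨m₁, hm₁⟩ := EA.surj₂_shift hW 1 ((m ≫ EB.f) ≫ c)
    have hm₁l : m₁ ≫ l⟦(1 : ℤ)⟧' = 0 := by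
      refine EZ.inj₂_shift hW 1 _ ?_
      rw [Category.assoc, ← Functor.map_comp, hl, Functor.map_comp, ← Category.assoc,
        ← hm₁, Category.assoc, hca, comp_zero]
    obtain ⟨u₀, hu₀⟩ := Triangle.coyoneda_exact₁ _ hTR m₁ hm₁l
    change W ⟶ R at u₀
    change m₁ = u₀ ≫ ν at hu₀
    have hc : ((m ≫ EB.f) - u₀ ≫ ε) ≫ c = 0 := by
      rw [sub_comp, Category.assoc u₀ ε c, ← hε₂, ← Category.assoc, ← hu₀, ← hm₁, sub_self]
    obtain ⟨ρ₀, hρ₀⟩ := Triangle.coyoneda_exact₃ _ hT _ hc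
    change W ⟶ Z at ρ₀
    change m ≫ EB.f - u₀ ≫ ε = ρ₀ ≫ b at hρ₀
    obtain ⟨ρ', hρ'⟩ := EZ.surj₂ hW ρ₀
    refine ⟨u₀ + ρ' ≫ μ, ?_⟩
    have h1 : (u₀ + ρ' ≫ μ) ≫ ε = m ≫ EB.f := by
      rw [add_comp, Category.assoc, hε₁, ← Category.assoc ρ' EZ.f b, ← hρ', ← hρ₀]
      abel
    have : ((u₀ + ρ' ≫ μ) ≫ ψ - m) ≫ EB.f = 0 := by
      rw [sub_comp, Category.assoc, ← hψ, h1, sub_self]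
    have := EB.inj₂ hW _ this
    rwa [sub_eq_zero] at this
  have hinj : ∀ (W : C), W ∈ D.T₂ → ∀ u : W ⟶ R, u ≫ ψ = 0 → u = 0 := by
    intro W hW u hu
    have hεu : u ≫ ε = 0 := by rw [hψ, ← Category.assoc, hu, zero_comp]
    have huν : u ≫ ν = 0 := by
      refine EA.inj₂_shift hW 1 _ ?_
      rw [Category.assoc, hε₂, ← Category.assoc, hεu, zero_comp]
    obtain ⟨v, hv⟩ := Triangle.coyoneda_exact₃ _ hTR u huν
    change W ⟶ EZ.Y at v
    change u = v ≫ μ at hv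
    have hvb : (v ≫ EZ.f) ≫ b = 0 := by
      rw [Category.assoc, ← hε₁, ← Category.assoc, ← hv, hεu]
    obtain ⟨w, hw⟩ := Triangle.coyoneda_exact₂ _ hT _ hvb
    change W ⟶ A at w
    change v ≫ EZ.f = w ≫ a at hw
    obtain ⟨w', hw'⟩ := EA.surj₂ hW w
    have : (v - w' ≫ l) ≫ EZ.f = 0 := by
      rw [sub_comp, Category.assoc, hl, ← Category.assoc, ← hw', ← hw, sub_self]
    have hveq := EZ.inj₂ hW _ this
    rw [sub_eq_zero] at hveq
    rw [hv, hveq, Category.assoc, hlμ, comp_zero]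
  obtain ⟨θ, hθ⟩ := hsurj EB.Y EB.hY (𝟙 EB.Y)
  have hψθ : ψ ≫ θ = 𝟙 R := by
    have : (ψ ≫ θ - 𝟙 R) ≫ ψ = 0 := by
      rw [sub_comp, Category.assoc, hθ]
      simp
    have := hinj R hRT₂ _ this
    rwa [sub_eq_zero] at this
  refine ⟨l, μ ≫ ψ, θ ≫ ν, ?_⟩
  refine isomorphic_distinguished _ hTR _
    (Triangle.isoMk _ _ (Iso.refl _) (Iso.refl _) ⟨θ, ψ, hθ, hψθ⟩ ?_ ?_ ?_)
  · change l ≫ 𝟙 EZ.Y = 𝟙 EA.Y ≫ l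
    simp
  · change (μ ≫ ψ) ≫ θ = 𝟙 EZ.Y ≫ μ
    rw [Category.id_comp, Category.assoc, hψθ, Category.comp_id]
  · change (θ ≫ ν) ≫ (𝟙 EA.Y)⟦(1 : ℤ)⟧' = θ ≫ ν
    simp

lemma envelope_iso {I : Set C} {X X' : C} (h : envelope I X) (e : X ≅ X') :
    envelope I X' :=
  envelope.summand e.inv e.hom (by simp) h

lemma genIdx_eq (X : C) (n : ℕ) : ∃ I : Set C, genIdx X n = {Y | envelope I Y} := by
  cases n
  · exact ⟨{X}, rfl⟩
  · exact ⟨_, rfl⟩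

lemma genIdx_shift {X Z : C} {n : ℕ} (h : Z ∈ genIdx X n) (m : ℤ) :
    Z⟦m⟧ ∈ genIdx X n := by
  obtain ⟨I, hI⟩ := genIdx_eq X n
  rw [hI] at h ⊢
  exact envelope.shift m h

lemma genIdx_sum {X Z Z' : C} {n : ℕ} (h : Z ∈ genIdx X n) (h' : Z' ∈ genIdx X n) :
    (Z ⊞ Z') ∈ genIdx X n := by
  obtain ⟨I, hI⟩ := genIdx_eq X n
  rw [hI] at h h' ⊢
  exact envelope.sum h h'

lemma genIdx_summand {X Z Z' : C} {n : ℕ} (s : Z ⟶ Z') (r : Z' ⟶ Z)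
    (hsr : s ≫ r = 𝟙 Z) (h : Z' ∈ genIdx X n) : Z ∈ genIdx X n := by
  obtain ⟨I, hI⟩ := genIdx_eq X n
  rw [hI] at h ⊢
  exact envelope.summand s r hsr h

lemma genIdx_iso {X Z Z' : C} {n : ℕ} (h : Z ∈ genIdx X n) (e : Z ≅ Z') :
    Z' ∈ genIdx X n :=
  genIdx_summand e.inv e.hom (by simp) h

/-- `T₁` is closed under direct summands. -/
lemma summand_mem₁ {Z Z' : C} (s : Z ⟶ Z') (r : Z' ⟶ Z) (hsr : s ≫ r = 𝟙 Z)
    (hZ' : Z' ∈ D.T₁) : Z ∈ D.T₁ := by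
  set E := Dec.ofDecomp (D := D) Z with hE
  have hf0 : E.f = 0 := by
    have h2 : E.f ≫ s = 0 := D.homZero hZ' E.hY _
    calc E.f = E.f ≫ (s ≫ r) := by rw [hsr, Category.comp_id]
    _ = (E.f ≫ s) ≫ r := by rw [Category.assoc]
    _ = 0 := by rw [h2, zero_comp]
  have h1Y : 𝟙 (E.Y⟦(1 : ℤ)⟧) = 0 := by
    obtain ⟨w, hw⟩ := Triangle.coyoneda_exact₃ _ (rot_of_distTriang _ E.dist)
      (𝟙 (E.Y⟦(1 : ℤ)⟧)) (by change 𝟙 _ ≫ (-E.f⟦(1 : ℤ)⟧') = 0; rw [hf0]; simp)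
    change E.Y⟦(1 : ℤ)⟧ ⟶ E.X at w
    change 𝟙 (E.Y⟦(1 : ℤ)⟧) = w ≫ E.h at hw
    rw [hw, D.homZero E.hX (D.shiftClosed₂ _ 1 E.hY) w, zero_comp]
  obtain ⟨q, hq⟩ := Triangle.yoneda_exact₂ _ E.dist (𝟙 Z)
    (by change E.f ≫ 𝟙 Z = 0; rw [Category.comp_id, hf0])
  change E.X ⟶ Z at q
  change 𝟙 Z = E.g ≫ q at hq
  have hqg : q ≫ E.g = 𝟙 E.X := by
    have h2 : E.g ≫ (𝟙 E.X - q ≫ E.g) = 0 := by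
      rw [comp_sub, Category.comp_id, ← Category.assoc, ← hq, Category.id_comp, sub_self]
    obtain ⟨w, hw⟩ := Triangle.yoneda_exact₂ _ (rot_of_distTriang _ E.dist) _ h2
    change E.Y⟦(1 : ℤ)⟧ ⟶ E.X at w
    change 𝟙 E.X - q ≫ E.g = E.h ≫ w at hw
    have hw0 : w = 0 := by rw [← Category.id_comp w, h1Y, zero_comp]
    have h3 : 𝟙 E.X - q ≫ E.g = 0 := by rw [hw, hw0, comp_zero]
    rw [sub_eq_zero] at h3
    exact h3.symm
  exact D.isoClosed₁ (show E.X ≅ Z from ⟨q, E.g, hqg, hq.symm⟩) E.hX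

/-- `T₂` is closed under direct summands. -/
lemma summand_mem₂ {Z Z' : C} (s : Z ⟶ Z') (r : Z' ⟶ Z) (hsr : s ≫ r = 𝟙 Z)
    (hZ' : Z' ∈ D.T₂) : Z ∈ D.T₂ := by
  set E := Dec.ofDecomp (D := D) Z with hE
  have hg0 : E.g = 0 := by
    have h2 : r ≫ E.g = 0 := D.homZero E.hX hZ' _
    calc E.g = (s ≫ r) ≫ E.g := by rw [hsr, Category.id_comp]
    _ = s ≫ (r ≫ E.g) := by rw [Category.assoc]
    _ = 0 := by rw [h2, comp_zero]
  have h1X : 𝟙 E.X = 0 := by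
    obtain ⟨w, hw⟩ := Triangle.yoneda_exact₂ _ (rot_of_distTriang _ E.dist) (𝟙 E.X)
      (by change E.g ≫ 𝟙 E.X = 0; rw [hg0, zero_comp])
    change E.Y⟦(1 : ℤ)⟧ ⟶ E.X at w
    change 𝟙 E.X = E.h ≫ w at hw
    rw [hw, D.homZero E.hX (D.shiftClosed₂ _ 1 E.hY) w, comp_zero]
  obtain ⟨t, ht⟩ := Triangle.coyoneda_exact₂ _ E.dist (𝟙 Z)
    (by change 𝟙 Z ≫ E.g = 0; rw [Category.id_comp, hg0])
  change Z ⟶ E.Y at t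
  change 𝟙 Z = t ≫ E.f at ht
  have hft : E.f ≫ t = 𝟙 E.Y := by
    have h2 : (𝟙 E.Y - E.f ≫ t) ≫ E.f = 0 := by
      rw [sub_comp, Category.id_comp, Category.assoc, ← ht, Category.comp_id, sub_self]
    obtain ⟨w, hw⟩ := Triangle.coyoneda_exact₂ _ (inv_rot_of_distTriang _ E.dist) _ h2
    change E.Y ⟶ E.X⟦(-1 : ℤ)⟧ at w
    have hw0 : w = 0 := by
      have h4 : 𝟙 (E.X⟦(-1 : ℤ)⟧) = 0 := by
        rw [← CategoryTheory.Functor.map_id (shiftFunctor C (-1 : ℤ)) E.X, h1X, Functor.map_zero]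
      rw [← Category.comp_id w, h4, comp_zero]
    have h3 : 𝟙 E.Y - E.f ≫ t = 0 := by
      rw [hw, hw0]
      exact zero_comp
    rw [sub_eq_zero] at h3
    exact h3.symm
  exact D.isoClosed₂ (show E.Y ≅ Z from ⟨E.f, t, hft, ht.symm⟩) E.hY

lemma envelope_subset₁ {I : Set C} (hI : ∀ W ∈ I, W ∈ D.T₁) :
    ∀ {Z : C}, envelope I Z → Z ∈ D.T₁ := by
  intro Z h
  induction h with
  | of h => exact hI _ h
  | shift m _ ih => exact D.shiftClosed₁ _ m ih
  | sum _ _ ih1 ih2 =>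
    exact D.extClosed₁ _ (binaryBiproductTriangle_distinguished _ _) ih1 ih2
  | summand s r hsr _ ih => exact summand_mem₁ s r hsr ih

lemma envelope_subset₂ {I : Set C} (hI : ∀ W ∈ I, W ∈ D.T₂) :
    ∀ {Z : C}, envelope I Z → Z ∈ D.T₂ := by
  intro Z h
  induction h with
  | of h => exact hI _ h
  | shift m _ ih => exact D.shiftClosed₂ _ m ih
  | sum _ _ ih1 ih2 =>
    exact D.extClosed₂ _ (binaryBiproductTriangle_distinguished _ _) ih1 ih2
  | summand s r hsr _ ih => exact summand_mem₂ s r hsr ih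

lemma genIdx_subset₁ {X : C} (hX : X ∈ D.T₁) :
    ∀ (n : ℕ) (Z : C), Z ∈ genIdx X n → Z ∈ D.T₁ := by
  intro n
  induction n with
  | zero =>
    intro Z hZ
    refine envelope_subset₁ (D := D) ?_ hZ
    rintro W rfl
    exact hX
  | succ n ih =>
    intro Z hZ
    refine envelope_subset₁ (D := D) ?_ hZ
    rintro W ⟨Y₁, Y₂, h1, h2, f, g, h, hd⟩
    refine D.extClosed₁ _ hd (ih _ h1) ?_
    refine envelope_subset₁ (D := D) ?_ h2
    rintro V rfl
    exact hX

lemma genIdx_subset₂ {X : C} (hX : X ∈ D.T₂) :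
    ∀ (n : ℕ) (Z : C), Z ∈ genIdx X n → Z ∈ D.T₂ := by
  intro n
  induction n with
  | zero =>
    intro Z hZ
    refine envelope_subset₂ (D := D) ?_ hZ
    rintro W rfl
    exact hX
  | succ n ih =>
    intro Z hZ
    refine envelope_subset₂ (D := D) ?_ hZ
    rintro W ⟨Y₁, Y₂, h1, h2, f, g, h, hd⟩
    refine D.extClosed₂ _ hd (ih _ h1) ?_
    refine envelope_subset₂ (D := D) ?_ h2
    rintro V rfl
    exact hX

/-- The key induction over the envelope structure: decompositions of generated objects
have generated components. -/
lemma env_main {I : Set C} {JX JY : Set C}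
    (hbase : ∀ Z ∈ I, ∃ E : Dec D Z, envelope JX E.X ∧ envelope JY E.Y) :
    ∀ {Z : C}, envelope I Z → ∃ E : Dec D Z, envelope JX E.X ∧ envelope JY E.Y := by
  intro Z h
  induction h with
  | of h => exact hbase _ h
  | @shift Z₀ m _ ih =>
    obtain ⟨E, hX, hY⟩ := ih
    exact ⟨E.shift m, envelope.shift m hX, envelope.shift m hY⟩
  | @sum Z₁ Z₂ _ _ ih1 ih2 =>
    obtain ⟨E₁, hX₁, hY₁⟩ := ih1
    obtain ⟨E₂, hX₂, hY₂⟩ := ih2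
    set E := Dec.ofDecomp (D := D) (Z₁ ⊞ Z₂)
    obtain ⟨eX, -⟩ := Dec.X_sum E₁ E₂ E
    obtain ⟨eY, -⟩ := Dec.Y_sum E₁ E₂ E
    exact ⟨E, envelope_iso (envelope.sum hX₁ hX₂) eX.symm,
      envelope_iso (envelope.sum hY₁ hY₂) eY.symm⟩
  | @summand Z₀ Z₁ s r hsr _ ih =>
    obtain ⟨E', hX, hY⟩ := ih
    set E := Dec.ofDecomp (D := D) Z₀
    obtain ⟨aX, bX, habX⟩ := Dec.X_summand E E' s r hsr
    obtain ⟨aY, bY, habY⟩ := Dec.Y_summand E E' s r hsr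
    exact ⟨E, envelope.summand aX bX habX hX, envelope.summand aY bY habY hY⟩

lemma main₀ {G : C} (EG : Dec D G) {Z : C} (h : Z ∈ genIdx G 0) :
    ∃ E : Dec D Z, E.X ∈ genIdx EG.X 0 ∧ E.Y ∈ genIdx EG.Y 0 := by
  refine env_main ?_ h
  rintro W rfl
  exact ⟨EG, envelope.of rfl, envelope.of rfl⟩

lemma main_lemma {G : C} (EG : Dec D G) :
    ∀ (n : ℕ) (Z : C), Z ∈ genIdx G n →
      ∃ E : Dec D Z, E.X ∈ genIdx EG.X n ∧ E.Y ∈ genIdx EG.Y n := by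
  intro n
  induction n with
  | zero => exact fun Z h => main₀ EG h
  | succ n ih =>
    intro Z hZ
    refine env_main ?_ hZ
    rintro W ⟨A, B, hA, hB, a, b, c, hd⟩
    obtain ⟨EA, hAX, hAY⟩ := ih A hA
    obtain ⟨EB, hBX, hBY⟩ := main₀ EG hB
    set E := Dec.ofDecomp (D := D) W
    obtain ⟨α, β, γ, hdx⟩ := Dec.X_ext EA E EB a b c hd
    obtain ⟨α', β', γ', hdy⟩ := Dec.Y_ext EA E EB a b c hd
    exact ⟨E, envelope.of ⟨EA.X, EB.X, hAX, hBX, α, β, γ, hdx⟩,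
      envelope.of ⟨EA.Y, EB.Y, hAY, hBY, α', β', γ', hdy⟩⟩

end Lemmas

theorem regular_summands_of_semiorthogonal_decomposition
    (C : Type u) [Category.{v} C] [HasZeroObject C] [Preadditive C]
    [HasShift C ℤ] [∀ n : ℤ, (shiftFunctor C n).Additive] [Pretriangulated C]
    [HasBinaryBiproducts C]
    (D : SemiorthogonalDecomposition C)
    -- `T` is regular: it has a strong generator
    (hreg : ∃ (G : C) (n : ℕ), genIdx G n = (Set.univ : Set C)) :
    -- then `T₁` and `T₂` are regular
    (∃ (G₁ : C) (n₁ : ℕ), genIdx G₁ n₁ = D.T₁) ∧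
    (∃ (G₂ : C) (n₂ : ℕ), genIdx G₂ n₂ = D.T₂) := by
  obtain ⟨G, n, hG⟩ := hreg
  have EG : Dec D G := Dec.ofDecomp G
  constructor
  · refine ⟨EG.X, n, Set.Subset.antisymm ?_ ?_⟩
    · intro Z hZ
      exact genIdx_subset₁ EG.hX n Z hZ
    · intro Z hZ
      have hZ' : Z ∈ genIdx G n := by rw [hG]; trivial
      obtain ⟨E, hX, -⟩ := main_lemma EG n Z hZ'
      have hf0 : E.f = 0 := D.homZero hZ E.hY _
      obtain ⟨q, hq⟩ := Triangle.yoneda_exact₂ _ E.dist (𝟙 Z)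
        (by change E.f ≫ 𝟙 Z = 0; rw [Category.comp_id, hf0])
      change E.X ⟶ Z at q
      change 𝟙 Z = E.g ≫ q at hq
      exact genIdx_summand E.g q hq.symm hX
  · refine ⟨EG.Y, n, Set.Subset.antisymm ?_ ?_⟩
    · intro Z hZ
      exact genIdx_subset₂ EG.hY n Z hZ
    · intro Z hZ
      have hZ' : Z ∈ genIdx G n := by rw [hG]; trivial
      obtain ⟨E, -, hY⟩ := main_lemma EG n Z hZ'
      have hg0 : E.g = 0 := D.homZero E.hX hZ _
      obtain ⟨t, ht⟩ := Triangle.coyoneda_exact₂ _ E.dist (𝟙 Z)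
        (by change 𝟙 Z ≫ E.g = 0; rw [Category.id_comp, hg0])
      change Z ⟶ E.Y at t
      change 𝟙 Z = t ≫ E.f at ht
      exact genIdx_summand t E.f ht.symm hY
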